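/- arXiv:1402.2321 — 7 statements merged into one kernel-verified Lean document; each statement's English description precedes it below -/
import Mathlib

section
/- Let R be a commutative ring, σ a ring automorphism of R, and δ a σ-derivation of R. Then δ extends to a σ̃-derivation δ̃ on the total ring of fractions Q(R) given by δ̃(a/s) = −(δ(s)/σ(s))·(a/s) + δ(a)/σ(s), where σ̃ is the automorphism of Q(R) induced by σ. -/
/-!
Cross-multiplying shows that the quotient rule `δ̃(a/s) = (s δa - a δs) / (σ(s) s)` is well
defined: if `a t = s b` then `δ(a t) = δ(s b)` and `δ(t s) = δ(s t)` give the required identity.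
Clearing denominators, additivity and the twisted Leibniz rule for `δ̃` become identities in `R`
that follow from the symmetry `σ(r) δ(s) + δ(r) s = σ(s) δ(r) + δ(s) r`, i.e. `δ(r s) = δ(s r)`.
-/

open Localization nonZeroDivisors

theorem MulEquivClass.map_mem_nonZeroDivisors {M₀ S F : Type*} [MonoidWithZero M₀]
    [MonoidWithZero S] [EquivLike F M₀ S] [MulEquivClass F M₀ S] (h : F) {x : M₀}
    (hx : x ∈ M₀⁰) : h x ∈ S⁰ :=
  MulEquivClass.map_nonZeroDivisors h ▸ Submonoid.mem_map_of_mem h hx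

namespace Localization

variable {R : Type*} [CommRing R] {M : Submonoid R}

theorem mk_eq_mk_iff_of_le_nonZeroDivisors (hM : M ≤ R⁰) {a c : R} {b d : M} :
    mk a b = mk c d ↔ a * d = b * c := by
  rw [mk_eq_mk_iff, r_iff_of_le_nonZeroDivisors hM]

theorem ringEquivOfRingEquiv_mk {S : Type*} [CommRing S] (σ : R ≃+* S) (a : R) (s : R⁰)
    (t : S⁰) (ht : (t : S) = σ s) :
    IsFractionRing.ringEquivOfRingEquiv σ (mk a s : Localization R⁰) = mk (σ a) t := by
  rw [mk_eq_mk', mk_eq_mk']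
  obtain rfl : t = ⟨σ s, MulEquivClass.map_mem_nonZeroDivisors σ s.2⟩ := Subtype.ext ht
  exact IsLocalization.ringEquivOfRingEquiv_mk' _ a s

end Localization

section SigmaDerivation

variable {R : Type*} [CommRing R] {σ : R ≃+* R} {δ : R → R}

theorem sigmaLeibniz_comm (hleib : ∀ r s, δ (r * s) = σ r * δ s + δ r * s) (r s : R) :
    σ r * δ s + δ r * s = σ s * δ r + δ s * r := by
  rw [← hleib, ← hleib, mul_comm]

theorem quotientRule_num_mul_eq_of_mul_eq (hleib : ∀ r s, δ (r * s) = σ r * δ s + δ r * s)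
    {a b s t : R} (h : a * t = s * b) :
    (s * δ a - a * δ s) * (σ t * t) = σ s * s * (t * δ b - b * δ t) := by
  have hδ : δ (t * a) = δ (s * b) := by rw [mul_comm, h]
  have hδ' : δ (t * s) = δ (s * t) := by rw [mul_comm]
  linear_combination (t * s) * (hδ - hleib t a + hleib s b) + (t * a) * (hleib t s - hδ')
    - (s * b) * hleib s t - δ (s * t) * h

variable (σ δ) in
noncomputable def extendSigmaDeriv (hleib : ∀ r s, δ (r * s) = σ r * δ s + δ r * s) :
    Localization R⁰ → Localization R⁰ :=
  fun x => x.liftOn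
    (fun a s => mk (s * δ a - a * δ s)
      ⟨σ s * s, mul_mem (MulEquivClass.map_mem_nonZeroDivisors σ s.2) s.2⟩)
    (fun {a _ _ _} hr => by
      rw [r_iff_of_le_nonZeroDivisors le_rfl] at hr
      rw [mk_eq_mk_iff_of_le_nonZeroDivisors le_rfl]
      exact quotientRule_num_mul_eq_of_mul_eq hleib hr)

variable (hleib : ∀ r s, δ (r * s) = σ r * δ s + δ r * s)

theorem extendSigmaDeriv_mk (a : R) (s : R⁰) :
    extendSigmaDeriv σ δ hleib (mk a s) = mk (s * δ a - a * δ s)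
      ⟨σ s * s, mul_mem (MulEquivClass.map_mem_nonZeroDivisors σ s.2) s.2⟩ :=
  liftOn_mk _ _ a s

theorem extendSigmaDeriv_mk_of_eq (a : R) (s t : R⁰) (ht : (t : R) = σ s) :
    extendSigmaDeriv σ δ hleib (mk a s) = -(mk (δ s) t * mk a s) + mk (δ a) t := by
  rw [extendSigmaDeriv_mk, mk_mul, neg_mk, add_mk, mk_eq_mk_iff_of_le_nonZeroDivisors le_rfl]
  push_cast [ht]
  ring

theorem extendSigmaDeriv_add (hadd : ∀ r s, δ (r + s) = δ r + δ s) (x y : Localization R⁰) :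
    extendSigmaDeriv σ δ hleib (x + y) =
      extendSigmaDeriv σ δ hleib x + extendSigmaDeriv σ δ hleib y := by
  refine Localization.induction_on₂ x y fun ⟨a, s⟩ ⟨b, t⟩ => ?_
  rw [add_mk, extendSigmaDeriv_mk, extendSigmaDeriv_mk, extendSigmaDeriv_mk, add_mk,
    mk_eq_mk_iff_of_le_nonZeroDivisors le_rfl]
  push_cast
  simp only [hadd, hleib, map_mul]
  linear_combination (σ s * s * σ t * t ^ 2 * a) * sigmaLeibniz_comm hleib t s

theorem extendSigmaDeriv_mul (x y : Localization R⁰) :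
    extendSigmaDeriv σ δ hleib (x * y) =
      IsFractionRing.ringEquivOfRingEquiv σ x * extendSigmaDeriv σ δ hleib y +
        extendSigmaDeriv σ δ hleib x * y := by
  refine Localization.induction_on₂ x y fun ⟨a, s⟩ ⟨b, t⟩ => ?_
  rw [mk_mul, extendSigmaDeriv_mk, extendSigmaDeriv_mk, extendSigmaDeriv_mk,
    ringEquivOfRingEquiv_mk σ a s ⟨σ s, MulEquivClass.map_mem_nonZeroDivisors σ s.2⟩ rfl,
    mk_mul, mk_mul, add_mk, mk_eq_mk_iff_of_le_nonZeroDivisors le_rfl]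
  push_cast
  simp only [hleib, map_mul]
  linear_combination (σ s ^ 2 * σ t * t ^ 2 * s * b) *
    (a * sigmaLeibniz_comm hleib t s - s * sigmaLeibniz_comm hleib t a)

end SigmaDerivation

/-- Let `R` be a commutative ring, `σ` a ring automorphism and `δ` a
`σ`-derivation of `R`. Then `δ` extends to a `σ̃`-derivation `D` on the total ring of
fractions `Q(R) = Localization (nonZeroDivisors R)`, given by
`D(a/s) = −(δ(s)/σ(s))·(a/s) + δ(a)/σ(s)`, where `σ̃ = τ` is the automorphism of `Q(R)`
induced by `σ` (so `τ(a/s) = σ(a)/σ(s)`). -/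
theorem sigma_derivation_extends_to_total_ring_of_fractions
    {R : Type*} [CommRing R] (σ : R ≃+* R) (δ : R → R)
    (hadd : ∀ r s : R, δ (r + s) = δ r + δ s)
    (hleib : ∀ r s : R, δ (r * s) = σ r * δ s + δ r * s) :
    ∃ (τ : Localization (nonZeroDivisors R) ≃+* Localization (nonZeroDivisors R))
      (D : Localization (nonZeroDivisors R) →+ Localization (nonZeroDivisors R)),
      (∀ (a : R) (s t : nonZeroDivisors R), (t : R) = σ s →
        τ (Localization.mk a s) = Localization.mk (σ a) t) ∧
      (∀ x y : Localization (nonZeroDivisors R), D (x * y) = τ x * D y + D x * y) ∧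
      (∀ (a : R) (s t : nonZeroDivisors R), (t : R) = σ s →
        D (Localization.mk a s) =
          -(Localization.mk (δ s) t * Localization.mk a s) + Localization.mk (δ a) t) :=
  ⟨IsFractionRing.ringEquivOfRingEquiv σ,
    AddMonoidHom.mk' (extendSigmaDeriv σ δ hleib) (extendSigmaDeriv_add hleib hadd),
    ringEquivOfRingEquiv_mk σ, extendSigmaDeriv_mul hleib, extendSigmaDeriv_mk_of_eq hleib⟩
end

section
/- Let R be a commutative ring and Σ = {σ₁, …, σₙ} a family of ring automorphisms of R. Then R is Σ-prime if and only if the total ring of fractions Q(R) is Σ̃-prime, where Σ̃ = {σ̃₁, …, σ̃ₙ} are the induced automorphisms on Q(R). -/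
/-- A commutative ring `R` is `Σ`-prime (w.r.t. a family `σ` of ring endomorphisms) if
whenever `J, K` are `Σ`-invariant ideals with `J·K = 0`, then `J = 0` or `K = 0`. -/
def IsSigmaPrimeRing {R : Type*} [CommRing R] {n : ℕ} (σ : Fin n → R →+* R) : Prop :=
  ∀ J K : Ideal R,
    (∀ i, ∀ r ∈ J, σ i r ∈ J) → (∀ i, ∀ r ∈ K, σ i r ∈ K) →
    J * K = ⊥ → J = ⊥ ∨ K = ⊥

/-!
Contraction and extension of ideals along `R → Q(R)` preserve invariance under the automorphisms
(because `σ̃ᵢ` extends `σᵢ`) and annihilating products (because `R → Q(R)` is injective). Every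
ideal of `Q(R)` is the extension of its contraction, and extension of a nonzero ideal of `R` is
nonzero, so a counterexample to `Σ`-primeness on either side transports to the other.
-/

namespace Ideal

variable {R S : Type*} [CommRing R] [CommRing S] {f : R →+* S} {σ : R →+* R} {τ : S →+* S}

theorem comap_le_comap_comap_of_comp_eq (hcomm : τ.comp f = f.comp σ) {J : Ideal S}
    (hJ : J ≤ J.comap τ) : J.comap f ≤ (J.comap f).comap σ := by
  rw [comap_comap, ← hcomm, ← comap_comap]
  exact comap_mono hJ

theorem map_le_comap_map_of_comp_eq (hcomm : τ.comp f = f.comp σ) {I : Ideal R}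
    (hI : I ≤ I.comap σ) : I.map f ≤ (I.map f).comap τ := by
  rw [map_le_iff_le_comap, comap_comap, hcomm, ← comap_comap]
  exact hI.trans (comap_mono le_comap_map)

theorem comap_mul_comap_eq_bot_of_injective (hf : Function.Injective f) {J K : Ideal S}
    (hJK : J * K = ⊥) : J.comap f * K.comap f = ⊥ :=
  eq_bot_iff.2 <| (le_comap_mul f).trans (hJK ▸ (comap_bot_of_injective f hf).le)

end Ideal

namespace IsSigmaPrimeRing

variable {R S : Type*} [CommRing R] [CommRing S] {n : ℕ} {f : R →+* S}
  {σ : Fin n → R →+* R} {τ : Fin n → S →+* S}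

theorem of_injective (hf : Function.Injective f) (hcomm : ∀ i, (τ i).comp f = f.comp (σ i))
    (hτ : IsSigmaPrimeRing τ) : IsSigmaPrimeRing σ := by
  intro J K hJ hK hJK
  have hmap : J.map f * K.map f = ⊥ := by rw [← Ideal.map_mul, hJK, Ideal.map_bot]
  simpa only [Ideal.map_eq_bot_iff_of_injective hf] using
    hτ _ _ (fun i => Ideal.map_le_comap_map_of_comp_eq (hcomm i) (hJ i))
      (fun i => Ideal.map_le_comap_map_of_comp_eq (hcomm i) (hK i)) hmap

theorem isLocalization [Algebra R S] {M : Submonoid R} [IsLocalization M S]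
    (hM : M ≤ nonZeroDivisors R)
    (hcomm : ∀ i, (τ i).comp (algebraMap R S) = (algebraMap R S).comp (σ i))
    (hσ : IsSigmaPrimeRing σ) : IsSigmaPrimeRing τ := by
  intro J K hJ hK hJK
  have hinj := IsLocalization.injective S hM
  rw [← IsLocalization.map_under M S J, ← IsLocalization.map_under M S K]
  simpa only [Ideal.map_eq_bot_iff_of_injective hinj] using
    hσ _ _ (fun i => Ideal.comap_le_comap_comap_of_comp_eq (hcomm i) (hJ i))
      (fun i => Ideal.comap_le_comap_comap_of_comp_eq (hcomm i) (hK i))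
      (Ideal.comap_mul_comap_eq_bot_of_injective hinj hJK)

end IsSigmaPrimeRing

/-- Let `R` be a commutative ring and `Σ = {σ 1, …, σ n}` a family of ring
automorphisms of `R`. Then `R` is `Σ`-prime if and only if the total ring of fractions
`Q(R) = Localization (nonZeroDivisors R)` is `Σ̃`-prime, where `Σ̃ = τ` is the induced
family of automorphisms of `Q(R)` (determined by `τ i ∘ algebraMap = algebraMap ∘ σ i`). -/
theorem sigmaPrime_iff_totalRingOfFractions_sigmaPrime
    {R : Type*} [CommRing R] {n : ℕ}
    (σ : Fin n → R ≃+* R)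
    (τ : Fin n → Localization (nonZeroDivisors R) ≃+* Localization (nonZeroDivisors R))
    (hcomp : ∀ i, ∀ r : R,
      τ i (algebraMap R (Localization (nonZeroDivisors R)) r) =
        algebraMap R (Localization (nonZeroDivisors R)) (σ i r)) :
    IsSigmaPrimeRing (fun i => (σ i : R →+* R)) ↔
      IsSigmaPrimeRing (fun i =>
        (τ i : Localization (nonZeroDivisors R) →+* Localization (nonZeroDivisors R))) := by
  have hcomm : ∀ i,
      (τ i : Localization (nonZeroDivisors R) →+* Localization (nonZeroDivisors R)).comp
        (algebraMap R _) = (algebraMap R _).comp (σ i : R →+* R) :=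
    fun i => RingHom.ext (hcomp i)
  exact ⟨IsSigmaPrimeRing.isLocalization le_rfl hcomm,
    IsSigmaPrimeRing.of_injective (IsFractionRing.injective R _) hcomm⟩
end

section
/- With R, Σ, Δ, I, and the chain I₀ ⊇ I₁ ⊇ I₂ ⊇ ⋯ as defined (I_j consisting of elements of I all of whose iterated images under operators of the form δ_{i₁}τ₁⋯δ_{i_l}τ_l with l < j and τ's arbitrary finite products from Σ remain in I), each I_j is a Σ-invariant ideal of R, and moreover I·I_j ⊆ I_{j+1} for every j ≥ 0; in particular I^j ⊆ I_j, so I^m ⊆ I_m for all m. -/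
/-- `sigmaWord σ w` is the finite composition `σ_{k₁} ∘ ⋯ ∘ σ_{k_m}` of endomorphisms from
the family `σ` indicated by the word `w` (the empty word gives the identity). -/
def sigmaWord {R : Type*} [CommRing R] {n : ℕ} (σ : Fin n → R →+* R)
    (w : List (Fin n)) (r : R) : R :=
  w.foldr (fun k s => σ k s) r

/-- `deltaOp σ δ L` is the composite operator `δ_{i₁}τ₁ δ_{i₂}τ₂ ⋯ δ_{i_l}τ_l`, where
`L = [(i₁,w₁),…,(i_l,w_l)]` and `τ_k = sigmaWord σ w_k` is an arbitrary finite product of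
elements of `Σ`. -/
def deltaOp {R : Type*} [CommRing R] {n : ℕ} (σ : Fin n → R →+* R)
    (δ : Fin n → R → R) (L : List (Fin n × List (Fin n))) (r : R) : R :=
  L.foldr (fun p s => δ p.1 (sigmaWord σ p.2 s)) r

/-- The descending chain: `I₀ = R`, `I₁ = I`, and for `j ≥ 2`,
`I_j = {r ∈ I | δ_{i₁}τ₁⋯δ_{i_l}τ_l (r) ∈ I for all 1 ≤ l ≤ j−1 and all choices}`. -/
def idealChain {R : Type*} [CommRing R] {n : ℕ} (σ : Fin n → R →+* R)
    (δ : Fin n → R → R) (I : Ideal R) : ℕ → Set R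
  | 0 => Set.univ
  | j + 1 => {r | r ∈ I ∧ ∀ L : List (Fin n × List (Fin n)),
      1 ≤ L.length → L.length ≤ j → deltaOp σ δ L r ∈ I}

section Aux

variable {R : Type*} [CommRing R] {n : ℕ}

lemma sigmaWord_cons (σ : Fin n → R →+* R) (k : Fin n) (w : List (Fin n)) (r : R) :
    sigmaWord σ (k :: w) r = σ k (sigmaWord σ w r) := rfl

lemma sigmaWord_append (σ : Fin n → R →+* R) (w : List (Fin n)) (i : Fin n) (r : R) :
    sigmaWord σ (w ++ [i]) r = sigmaWord σ w (σ i r) := by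
  simp [sigmaWord, List.foldr_append]

lemma sigmaWord_zero (σ : Fin n → R →+* R) (w : List (Fin n)) :
    sigmaWord σ w (0 : R) = 0 := by
  induction w with
  | nil => rfl
  | cons k w ih => rw [sigmaWord_cons, ih, map_zero]

lemma sigmaWord_add (σ : Fin n → R →+* R) (w : List (Fin n)) (x y : R) :
    sigmaWord σ w (x + y) = sigmaWord σ w x + sigmaWord σ w y := by
  induction w with
  | nil => rfl
  | cons k w ih => rw [sigmaWord_cons, ih, map_add]; rfl

lemma sigmaWord_mul (σ : Fin n → R →+* R) (w : List (Fin n)) (x y : R) :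
    sigmaWord σ w (x * y) = sigmaWord σ w x * sigmaWord σ w y := by
  induction w with
  | nil => rfl
  | cons k w ih => rw [sigmaWord_cons, ih, map_mul]; rfl

lemma deltaOp_nil (σ : Fin n → R →+* R) (δ : Fin n → R → R) (r : R) :
    deltaOp σ δ [] r = r := rfl

lemma deltaOp_concat (σ : Fin n → R →+* R) (δ : Fin n → R → R)
    (L : List (Fin n × List (Fin n))) (p : Fin n × List (Fin n)) (r : R) :
    deltaOp σ δ (L ++ [p]) r = deltaOp σ δ L (δ p.1 (sigmaWord σ p.2 r)) := by
  simp [deltaOp, List.foldr_append]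

lemma deltaOp_concat' (σ : Fin n → R →+* R) (δ : Fin n → R → R)
    (L : List (Fin n × List (Fin n))) (k : Fin n) (w : List (Fin n)) (r : R) :
    deltaOp σ δ (L ++ [(k, w)]) r = deltaOp σ δ L (δ k (sigmaWord σ w r)) :=
  deltaOp_concat σ δ L (k, w) r

lemma delta_zero (δ : Fin n → R → R)
    (hadd : ∀ i, ∀ r s : R, δ i (r + s) = δ i r + δ i s) (i : Fin n) :
    δ i (0 : R) = 0 := by
  have h := hadd i 0 0
  rw [add_zero] at h
  exact left_eq_add.mp h

lemma deltaOp_zero (σ : Fin n → R →+* R) (δ : Fin n → R → R)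
    (hadd : ∀ i, ∀ r s : R, δ i (r + s) = δ i r + δ i s)
    (L : List (Fin n × List (Fin n))) : deltaOp σ δ L (0 : R) = 0 := by
  induction L with
  | nil => rfl
  | cons p L ih =>
      show δ p.1 (sigmaWord σ p.2 (deltaOp σ δ L 0)) = 0
      rw [ih, sigmaWord_zero, delta_zero δ hadd]

lemma deltaOp_add (σ : Fin n → R →+* R) (δ : Fin n → R → R)
    (hadd : ∀ i, ∀ r s : R, δ i (r + s) = δ i r + δ i s)
    (L : List (Fin n × List (Fin n))) (x y : R) :
    deltaOp σ δ L (x + y) = deltaOp σ δ L x + deltaOp σ δ L y := by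
  induction L with
  | nil => rfl
  | cons p L ih =>
      show δ p.1 (sigmaWord σ p.2 (deltaOp σ δ L (x + y))) = _
      rw [ih, sigmaWord_add, hadd]; rfl

lemma sigmaWord_mem (σ : Fin n → R →+* R) (I : Ideal R)
    (hinv : ∀ i, ∀ r ∈ I, σ i r ∈ I) (w : List (Fin n)) {r : R} (h : r ∈ I) :
    sigmaWord σ w r ∈ I := by
  induction w with
  | nil => exact h
  | cons k w ih => exact hinv k _ ih

lemma sigma_inv_aux (σ : Fin n → R →+* R) (δ : Fin n → R → R) (I : Ideal R)
    (hinv : ∀ i, ∀ r ∈ I, σ i r ∈ I) (m : ℕ) {r : R}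
    (h : ∀ L : List (Fin n × List (Fin n)), L.length ≤ m → deltaOp σ δ L r ∈ I)
    (i : Fin n) :
    ∀ L : List (Fin n × List (Fin n)), L.length ≤ m → deltaOp σ δ L (σ i r) ∈ I := by
  intro L hL
  rcases List.eq_nil_or_concat L with rfl | ⟨L₀, p, rfl⟩
  · exact hinv i r (h [] (by simp))
  · obtain ⟨k, w⟩ := p
    rw [List.concat_eq_append, deltaOp_concat']
    have : sigmaWord σ w (σ i r) = sigmaWord σ (w ++ [i]) r := (sigmaWord_append σ w i r).symm
    rw [this, ← deltaOp_concat' σ δ L₀ k (w ++ [i]) r]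
    apply h
    simpa using hL

lemma sigmaWord_inv_aux (σ : Fin n → R →+* R) (δ : Fin n → R → R) (I : Ideal R)
    (hinv : ∀ i, ∀ r ∈ I, σ i r ∈ I) (m : ℕ) {r : R}
    (h : ∀ L : List (Fin n × List (Fin n)), L.length ≤ m → deltaOp σ δ L r ∈ I)
    (w : List (Fin n)) :
    ∀ L : List (Fin n × List (Fin n)), L.length ≤ m → deltaOp σ δ L (sigmaWord σ w r) ∈ I := by
  induction w with
  | nil => exact h
  | cons k w ih => exact sigma_inv_aux σ δ I hinv m ih k

lemma mulMem (σ : Fin n → R →+* R) (δ : Fin n → R → R)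
    (hadd : ∀ i, ∀ r s : R, δ i (r + s) = δ i r + δ i s)
    (hleib : ∀ i, ∀ r s : R, δ i (r * s) = σ i r * δ i s + δ i r * s)
    (I : Ideal R) (hinv : ∀ i, ∀ r ∈ I, σ i r ∈ I) :
    ∀ (L : List (Fin n × List (Fin n))) (c r : R),
      (∀ L' : List (Fin n × List (Fin n)), L'.length ≤ L.length → deltaOp σ δ L' r ∈ I) →
      deltaOp σ δ L (c * r) ∈ I := by
  intro L
  induction L using List.reverseRecOn with
  | nil =>
      intro c r h
      exact I.mul_mem_left c (h [] (by simp))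
  | append_singleton L₀ p ih =>
      intro c r h
      obtain ⟨k, w⟩ := p
      rw [deltaOp_concat']
      have : δ k (sigmaWord σ w (c * r))
          = σ k (sigmaWord σ w c) * δ k (sigmaWord σ w r)
            + δ k (sigmaWord σ w c) * sigmaWord σ w r := by
        rw [sigmaWord_mul, hleib]
      simp only [this]
      rw [deltaOp_add σ δ hadd]
      apply I.add_mem
      · apply ih
        intro L' hL'
        rw [← deltaOp_concat' σ δ L' k w r]
        apply h
        simp only [List.length_append, List.length_cons, List.length_nil]
        omega
      · apply ih
        apply sigmaWord_inv_aux σ δ I hinv L₀.length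
        intro L' hL'
        apply h
        simp only [List.length_append, List.length_cons, List.length_nil]
        omega

lemma mulMem' (σ : Fin n → R →+* R) (δ : Fin n → R → R)
    (hadd : ∀ i, ∀ r s : R, δ i (r + s) = δ i r + δ i s)
    (hleib : ∀ i, ∀ r s : R, δ i (r * s) = σ i r * δ i s + δ i r * s)
    (I : Ideal R) (hinv : ∀ i, ∀ r ∈ I, σ i r ∈ I) :
    ∀ (L : List (Fin n × List (Fin n))) (a b : R), a ∈ I →
      (∀ L' : List (Fin n × List (Fin n)), L'.length + 1 ≤ L.length → deltaOp σ δ L' b ∈ I) →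
      deltaOp σ δ L (a * b) ∈ I := by
  intro L
  induction L using List.reverseRecOn with
  | nil =>
      intro a b ha _
      exact I.mul_mem_right b ha
  | append_singleton L₀ p ih =>
      intro a b ha hb
      obtain ⟨k, w⟩ := p
      rw [deltaOp_concat']
      have : δ k (sigmaWord σ w (a * b))
          = σ k (sigmaWord σ w a) * δ k (sigmaWord σ w b)
            + δ k (sigmaWord σ w a) * sigmaWord σ w b := by
        rw [sigmaWord_mul, hleib]
      simp only [this]
      rw [deltaOp_add σ δ hadd]
      apply I.add_mem
      · apply ih
        · exact hinv k _ (sigmaWord_mem σ I hinv w ha)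
        · intro L' hL'
          rw [← deltaOp_concat' σ δ L' k w b]
          apply hb
          simp only [List.length_append, List.length_cons, List.length_nil]
          omega
      · apply mulMem σ δ hadd hleib I hinv
        apply sigmaWord_inv_aux σ δ I hinv L₀.length
        intro L' hL'
        apply hb
        simp only [List.length_append, List.length_cons, List.length_nil]
        omega

lemma mem_chain_succ (σ : Fin n → R →+* R) (δ : Fin n → R → R) (I : Ideal R)
    (j : ℕ) (r : R) :
    r ∈ idealChain σ δ I (j + 1) ↔
      ∀ L : List (Fin n × List (Fin n)), L.length ≤ j → deltaOp σ δ L r ∈ I := by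
  constructor
  · rintro ⟨h1, h2⟩ L hL
    cases L with
    | nil => exact h1
    | cons p L' => exact h2 _ (by simp) hL
  · intro h
    exact ⟨h [] (by simp), fun L _ h2 => h L h2⟩

end Aux

/-- With `R, Σ, Δ, I` and the chain `I₀ ⊇ I₁ ⊇ I₂ ⊇ ⋯` as above, each `I_j`
is a `Σ`-invariant ideal of `R`, `I·I_j ⊆ I_{j+1}` for every `j ≥ 0`, and in particular
`I^m ⊆ I_m` for all `m`. -/
theorem chain_ideals_invariant_and_powers
    {R : Type*} [CommRing R] {n : ℕ}
    (σ : Fin n → R →+* R) (δ : Fin n → R → R)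
    (hadd : ∀ i, ∀ r s : R, δ i (r + s) = δ i r + δ i s)
    (hleib : ∀ i, ∀ r s : R, δ i (r * s) = σ i r * δ i s + δ i r * s)
    (I : Ideal R) (hinv : ∀ i, ∀ r ∈ I, σ i r ∈ I) :
    (∀ j : ℕ, ∃ J : Ideal R, (J : Set R) = idealChain σ δ I j) ∧
    (∀ j : ℕ, ∀ i, ∀ r ∈ idealChain σ δ I j, σ i r ∈ idealChain σ δ I j) ∧
    (∀ j : ℕ, ∀ a ∈ I, ∀ b ∈ idealChain σ δ I j, a * b ∈ idealChain σ δ I (j + 1)) ∧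
    (∀ m : ℕ, ((I ^ m : Ideal R) : Set R) ⊆ idealChain σ δ I m) := by
  -- the ideal structure on each `idealChain σ δ I (j+1)`
  have Jdef : ∀ j : ℕ, ∃ J : Ideal R, (J : Set R) = idealChain σ δ I (j + 1) := by
    intro j
    refine ⟨{ carrier := idealChain σ δ I (j + 1),
              zero_mem' := ?_, add_mem' := ?_, smul_mem' := ?_ }, rfl⟩
    · intro a b ha hb
      rw [mem_chain_succ] at ha hb ⊢
      intro L hL
      rw [deltaOp_add σ δ hadd]
      exact I.add_mem (ha L hL) (hb L hL)
    · exact (mem_chain_succ σ δ I j 0).2 fun L _ => by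
        rw [deltaOp_zero σ δ hadd]; exact I.zero_mem
    · intro c x hx
      simp only [smul_eq_mul]
      rw [mem_chain_succ] at hx ⊢
      intro L hL
      exact mulMem σ δ hadd hleib I hinv L c x fun L' hL' => hx L' (le_trans hL' hL)
  have part3 : ∀ j : ℕ, ∀ a ∈ I, ∀ b ∈ idealChain σ δ I j,
      a * b ∈ idealChain σ δ I (j + 1) := by
    intro j a ha b hb
    rw [mem_chain_succ]
    intro L hL
    apply mulMem' σ δ hadd hleib I hinv L a b ha
    intro L' hL'
    have h1 : L'.length + 1 ≤ j := le_trans hL' hL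
    cases j with
    | zero => omega
    | succ j' =>
        rw [mem_chain_succ] at hb
        exact hb L' (by omega)
  refine ⟨?_, ?_, part3, ?_⟩
  · intro j
    cases j with
    | zero => exact ⟨⊤, by simp [idealChain]⟩
    | succ j => exact Jdef j
  · intro j i r hr
    cases j with
    | zero => trivial
    | succ j =>
        rw [mem_chain_succ] at hr ⊢
        exact sigma_inv_aux σ δ I hinv j hr i
  · intro m
    induction m with
    | zero => simp [idealChain]
    | succ m ih =>
        obtain ⟨J, hJ⟩ := Jdef m
        have hle : I ^ (m + 1) ≤ J := by
          rw [pow_succ]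
          refine Ideal.mul_le.2 fun r hr s hs => ?_
          have : s * r ∈ idealChain σ δ I (m + 1) := part3 m s hs r (ih hr)
          have hmem : s * r ∈ (J : Set R) := by rw [hJ]; exact this
          rwa [mul_comm] at hmem
        intro x hx
        have : x ∈ (J : Set R) := hle hx
        rwa [hJ] at this
end

section
/- Let R be a commutative Noetherian ring and (Σ, Δ) a system of automorphisms σ₁,…,σₙ and σᵢ-derivations δ₁,…,δₙ of R. If R is (Σ,Δ)-prime (the only pair of nonzero ideals invariant under all σᵢ and all δᵢ with zero product does not exist), then the nilradical rad(R) is a Σ-prime ideal of R. -/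
/-!
Suppose `J`, `K` are `Σ`-ideals with `J K ⊆ rad R` but neither inside `rad R`. As `rad R` is
nilpotent, `Jᵗ Kᵗ = 0` for some `t`. The chain `ann (Kᵗ)ᵐ` stabilizes, and at a stable index
`A = ann (Kᵗ)ᵐ` is a `(Σ,Δ)`-ideal: a `σ`-derivation maps `(Kᵗ)ᵐ⁺¹` into `(Kᵗ)ᵐ`, and in a
Noetherian ring a `σ`-stable ideal is also `σ⁻¹`-stable. Then `ann A` is a `(Σ,Δ)`-ideal too,
`A ⊇ Jᵗ` and `ann A ⊇ Kᵗᵐ`, so `A · ann A = 0` contradicts `(Σ,Δ)`-primeness, because none of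
these powers vanishes.
-/

open Set

namespace Ideal

variable {R : Type*} [CommRing R]

theorem comap_eq_self_of_le_comap [IsNoetherianRing R] (e : R ≃+* R) {I : Ideal R}
    (hI : I ≤ I.comap e) : I.comap e = I := by
  set f : Ideal R → Ideal R := comap e
  have hchain : Monotone (f^[·] I) := monotone_nat_of_le_succ fun k => by
    rw [Function.iterate_succ_apply]
    exact Monotone.iterate (f := f) (fun _ _ h => comap_mono h) k hI
  obtain ⟨k, hk⟩ := monotone_stabilizes_iff_noetherian.mpr inferInstance ⟨_, hchain⟩
  have hstep : f^[k] I = f^[k] (f I) := by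
    rw [← Function.iterate_succ_apply]
    exact hk (k + 1) k.le_succ
  exact ((comap_injective_of_surjective e e.surjective).iterate k hstep).symm

theorem mapsTo_symm_of_mapsTo [IsNoetherianRing R] (e : R ≃+* R) {I : Ideal R}
    (hI : MapsTo e I I) : MapsTo e.symm I I := fun x hx => by
  rw [SetLike.mem_coe, ← comap_eq_self_of_le_comap e hI, mem_comap, e.apply_symm_apply]
  exact hx

theorem mapsTo_pow_of_mapsTo (e : R ≃+* R) {I : Ideal R} (hI : MapsTo e I I) (k : ℕ) :
    MapsTo e ↑(I ^ k) ↑(I ^ k) := by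
  have : map e I ≤ I := map_le_iff_le_comap.mpr hI
  exact map_le_iff_le_comap.mp ((Ideal.map_pow _ I k).trans_le (pow_right_mono this k))

theorem mapsTo_annihilator_of_mapsTo [IsNoetherianRing R] (e : R ≃+* R) {I : Ideal R}
    (hI : MapsTo e I I) : MapsTo e I.annihilator I.annihilator := fun r hr => by
  rw [SetLike.mem_coe, Submodule.mem_annihilator] at hr ⊢
  intro x hx
  have hrx : r * e.symm x = 0 := hr _ (mapsTo_symm_of_mapsTo e hI hx)
  rw [smul_eq_mul, ← e.apply_symm_apply x, ← map_mul, hrx, map_zero]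

theorem le_nilradical_of_pow_eq_bot {I : Ideal R} {n : ℕ} (h : I ^ n = ⊥) :
    I ≤ nilradical R :=
  fun _ hx => ⟨n, mem_bot.mp (h ▸ pow_mem_pow hx n)⟩

theorem exists_annihilator_pow_succ_eq [IsNoetherianRing R] (I : Ideal R) (a : ℕ) :
    ∃ m ≥ a, (I ^ (m + 1)).annihilator = (I ^ m).annihilator := by
  obtain ⟨k, hk⟩ := monotone_stabilizes_iff_noetherian.mpr inferInstance
    ⟨fun m => (I ^ m).annihilator, fun _ _ h => Submodule.annihilator_mono (pow_le_pow_right h)⟩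
  have hmax : max k a ≥ k := le_max_left k a
  exact ⟨max k a, le_max_right k a, (hk _ (hmax.trans (Nat.le_succ _))).symm.trans (hk _ hmax)⟩

variable (σ : R ≃+* R) (δ : R →+ R)

theorem mapsTo_pow_succ_pow (hδ : ∀ r s, δ (r * s) = σ r * δ s + δ r * s) {I : Ideal R}
    (hI : MapsTo σ I I) (k : ℕ) : MapsTo δ ↑(I ^ (k + 1)) ↑(I ^ k) := by
  induction k with
  | zero => simp
  | succ k ih =>
    intro r hr
    rw [SetLike.mem_coe, pow_succ] at hr
    refine Submodule.mul_induction_on hr (fun a ha x hx => ?_) (fun x y hx hy => ?_)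
    · rw [hδ, pow_succ]
      exact add_mem (mul_mem_right _ _ (mapsTo_pow_of_mapsTo σ hI _ ha))
        (mul_mem_mul (ih ha) hx)
    · rw [SetLike.mem_coe, map_add]
      exact add_mem hx hy

theorem apply_mem_annihilator (hδ : ∀ r s, δ (r * s) = σ r * δ s + δ r * s)
    {I J : Ideal R} (hIJ : MapsTo δ I J) {r : R} (hr : r ∈ I.annihilator)
    (hσr : σ r ∈ J.annihilator) : δ r ∈ I.annihilator := by
  rw [Submodule.mem_annihilator] at hr hσr ⊢
  intro x hx
  have hrx : δ (r * x) = 0 := by rw [← smul_eq_mul, hr x hx, map_zero]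
  rwa [hδ, ← smul_eq_mul, hσr _ (hIJ hx), zero_add] at hrx

end Ideal

section SigmaDelta

variable {R ι : Type*} [CommRing R]

def Ideal.IsSigmaDeltaStable (σ : ι → R ≃+* R) (δ : ι → R →+ R) (I : Ideal R) : Prop :=
  ∀ i, MapsTo (σ i) I I ∧ MapsTo (δ i) I I

variable [IsNoetherianRing R] (σ : ι → R ≃+* R) (δ : ι → R →+ R)

theorem Ideal.IsSigmaDeltaStable.annihilator
    (hδ : ∀ i r s, δ i (r * s) = σ i r * δ i s + δ i r * s) {I : Ideal R}
    (hI : I.IsSigmaDeltaStable σ δ) : I.annihilator.IsSigmaDeltaStable σ δ := fun i =>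
  have hσ := mapsTo_annihilator_of_mapsTo (σ i) (hI i).1
  ⟨hσ, fun _ hr => apply_mem_annihilator (σ i) (δ i) (hδ i) (hI i).2 hr (hσ hr)⟩

theorem Ideal.isSigmaDeltaStable_annihilator_pow
    (hδ : ∀ i r s, δ i (r * s) = σ i r * δ i s + δ i r * s) {I : Ideal R}
    (hI : ∀ i, MapsTo (σ i) I I) {m : ℕ}
    (hm : (I ^ (m + 1)).annihilator = (I ^ m).annihilator) :
    (I ^ m).annihilator.IsSigmaDeltaStable σ δ := fun i =>
  have hσ := mapsTo_annihilator_of_mapsTo (σ i) (mapsTo_pow_of_mapsTo (σ i) (hI i) m)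
  ⟨hσ, fun _ hr => hm ▸ apply_mem_annihilator (σ i) (δ i) (hδ i)
    (mapsTo_pow_succ_pow (σ i) (δ i) (hδ i) (hI i) m)
    (Submodule.annihilator_mono (pow_le_pow_right m.le_succ) hr) (hσ hr)⟩

theorem Ideal.exists_isSigmaDeltaStable_mul_eq_bot
    (hδ : ∀ i r s, δ i (r * s) = σ i r * δ i s + δ i r * s) {J K : Ideal R}
    (hK : ∀ i, MapsTo (σ i) K K) (hJK : J * K = ⊥) :
    ∃ A B : Ideal R, A.IsSigmaDeltaStable σ δ ∧ B.IsSigmaDeltaStable σ δ ∧ A * B = ⊥ ∧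
      J ≤ A ∧ ∃ m, K ^ m ≤ B := by
  obtain ⟨m, hm1, hm⟩ := K.exists_annihilator_pow_succ_eq 1
  have hA := isSigmaDeltaStable_annihilator_pow σ δ hδ hK hm
  refine ⟨_, _, hA, hA.annihilator σ δ hδ, Submodule.mul_annihilator _, ?_, m, ?_⟩
  · rw [Submodule.le_annihilator_iff, smul_eq_mul, ← le_bot_iff, ← hJK]
    exact mul_mono_right (pow_le_self (by omega))
  · rw [Submodule.le_annihilator_iff, smul_eq_mul, mul_comm, Submodule.annihilator_mul]

end SigmaDelta

/-- Let `R` be a commutative Noetherian ring and `(Σ, Δ)` a system of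
automorphisms `σ 1, …, σ n` and `σ i`-derivations `δ 1, …, δ n` of `R`. If `R` is
`(Σ,Δ)`-prime (the zero ideal is `(Σ,Δ)`-prime: it is proper and there is no pair of nonzero
ideals invariant under all `σ i` and all `δ i` with zero product), then the nilradical
`rad(R)` is a `Σ`-prime ideal of `R`. -/
theorem nilradical_sigmaPrime_of_sigmaDeltaPrime
    {R : Type*} [CommRing R] [IsNoetherianRing R] {n : ℕ}
    (σ : Fin n → R ≃+* R) (δ : Fin n → R → R)
    (hadd : ∀ i, ∀ r s : R, δ i (r + s) = δ i r + δ i s)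
    (hleib : ∀ i, ∀ r s : R, δ i (r * s) = σ i r * δ i s + δ i r * s)
    (hbotproper : (⊥ : Ideal R) ≠ ⊤)
    (hSDprime : ∀ J K : Ideal R,
      (∀ i, ∀ r ∈ J, σ i r ∈ J) → (∀ i, ∀ r ∈ J, δ i r ∈ J) →
      (∀ i, ∀ r ∈ K, σ i r ∈ K) → (∀ i, ∀ r ∈ K, δ i r ∈ K) →
      J * K = ⊥ → J = ⊥ ∨ K = ⊥) :
    nilradical R ≠ ⊤ ∧
    (∀ i, ∀ r ∈ nilradical R, σ i r ∈ nilradical R) ∧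
    (∀ J K : Ideal R,
      (∀ i, ∀ r ∈ J, σ i r ∈ J) → (∀ i, ∀ r ∈ K, σ i r ∈ K) →
      J * K ≤ nilradical R → J ≤ nilradical R ∨ K ≤ nilradical R) := by
  let δ' : Fin n → R →+ R := fun i => AddMonoidHom.mk' (δ i) (hadd i)
  refine ⟨fun h => hbotproper (Ideal.radical_eq_top.mp h),
    fun i r hr => mem_nilradical.mpr ((mem_nilradical.mp hr).map (σ i)), ?_⟩
  intro J K _ hK hJK
  by_contra! hJK'
  obtain ⟨t, ht⟩ := IsNoetherianRing.isNilpotent_nilradical R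
  have hJKt : J ^ t * K ^ t = ⊥ := by
    rw [← mul_pow, ← le_bot_iff, ← Ideal.zero_eq_bot, ← ht]
    exact Ideal.pow_right_mono hJK t
  obtain ⟨A, B, hA, hB, hAB, hJA, m, hKB⟩ := Ideal.exists_isSigmaDeltaStable_mul_eq_bot σ δ' hleib
    (fun i => Ideal.mapsTo_pow_of_mapsTo (σ i) (hK i) t) hJKt
  rcases hSDprime A B (fun i => (hA i).1) (fun i => (hA i).2) (fun i => (hB i).1)
    (fun i => (hB i).2) hAB with rfl | rfl
  · exact hJK'.1 (Ideal.le_nilradical_of_pow_eq_bot (le_bot_iff.mp hJA))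
  · refine hJK'.2 (Ideal.le_nilradical_of_pow_eq_bot (n := t * m) ?_)
    rw [pow_mul, ← le_bot_iff]
    exact hKB
end

section
/- Let R be a commutative Noetherian semiprime ring and (Σ, Δ) a system of automorphisms and corresponding σᵢ-derivations of R. If R is (Σ,Δ)-prime, then R is Σ-prime. -/
/-- In a Noetherian ring, if a ring automorphism maps an ideal into itself,
then its inverse does too. -/
lemma aux_symm_mem_of_sigmaDeltaPrime {R : Type*} [CommRing R] [IsNoetherianRing R]
    (σ : R ≃+* R) (I : Ideal R) (hI : ∀ r ∈ I, σ r ∈ I) :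
    ∀ r ∈ I, σ.symm r ∈ I := by
  set f : ℕ →o Ideal R :=
    ⟨fun m => I.comap ((σ ^ m : R ≃+* R) : R →+* R), by
      apply monotone_nat_of_le_succ
      intro m x hx
      simp only [Ideal.mem_comap, RingHom.coe_coe] at hx ⊢
      have : (σ ^ (m + 1)) x = σ ((σ ^ m) x) := by
        rw [pow_succ']; rfl
      rw [this]
      exact hI _ hx⟩ with hf
  obtain ⟨N, hN⟩ := (monotone_stabilizes_iff_noetherian.mpr inferInstance) f
  intro r hr
  have h1 : ((σ ^ (N + 1) : R ≃+* R).symm r) ∈ f (N + 1) := by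
    simp only [hf, OrderHom.coe_mk, Ideal.mem_comap, RingHom.coe_coe]
    simpa using hr
  rw [← hN (N + 1) (Nat.le_succ N)] at h1
  simp only [hf, OrderHom.coe_mk, Ideal.mem_comap, RingHom.coe_coe] at h1
  have h2 : (σ ^ N) ((σ ^ (N + 1) : R ≃+* R).symm r) = σ.symm r := by
    apply σ.injective
    rw [RingEquiv.apply_symm_apply]
    have : σ ((σ ^ N) ((σ ^ (N + 1) : R ≃+* R).symm r))
        = (σ ^ (N + 1)) ((σ ^ (N + 1) : R ≃+* R).symm r) := by
      rw [pow_succ']; rfl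
    rw [this, RingEquiv.apply_symm_apply]
  rwa [h2] at h1

/-- Let `R` be a commutative Noetherian semiprime ring (zero nilradical) and
`(Σ, Δ)` a system of automorphisms and corresponding `σ i`-derivations of `R`. If `R` is
`(Σ,Δ)`-prime, then `R` is `Σ`-prime: no two nonzero `Σ`-invariant ideals have zero
product. -/
theorem sigmaPrime_of_sigmaDeltaPrime_semiprime
    {R : Type*} [CommRing R] [IsNoetherianRing R] {n : ℕ}
    (σ : Fin n → R ≃+* R) (δ : Fin n → R → R)
    (hadd : ∀ i, ∀ r s : R, δ i (r + s) = δ i r + δ i s)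
    (hleib : ∀ i, ∀ r s : R, δ i (r * s) = σ i r * δ i s + δ i r * s)
    (hsemiprime : nilradical R = ⊥)
    (hbotproper : (⊥ : Ideal R) ≠ ⊤)
    (hSDprime : ∀ J K : Ideal R,
      (∀ i, ∀ r ∈ J, σ i r ∈ J) → (∀ i, ∀ r ∈ J, δ i r ∈ J) →
      (∀ i, ∀ r ∈ K, σ i r ∈ K) → (∀ i, ∀ r ∈ K, δ i r ∈ K) →
      J * K = ⊥ → J = ⊥ ∨ K = ⊥) :
    ∀ J K : Ideal R,
      (∀ i, ∀ r ∈ J, σ i r ∈ J) → (∀ i, ∀ r ∈ K, σ i r ∈ K) →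
      J * K = ⊥ → J = ⊥ ∨ K = ⊥ := by
  -- δ i 0 = 0
  have hδ0 : ∀ i, δ i 0 = 0 := by
    intro i
    have := hadd i 0 0
    simp at this
    linear_combination (norm := ring_nf) this  -- fallback; fix below if fails
  -- square-zero elements vanish
  have hsq : ∀ x : R, x * x = 0 → x = 0 := by
    intro x hx
    have : x ∈ nilradical R := ⟨2, by rwa [pow_two]⟩
    rwa [hsemiprime, Ideal.mem_bot] at this
  -- annihilator of a Σ-invariant ideal is Σ-invariant
  have hannσ : ∀ (I : Ideal R), (∀ i, ∀ r ∈ I, σ i r ∈ I) →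
      ∀ i, ∀ a ∈ I.annihilator, σ i a ∈ I.annihilator := by
    intro I hI i a ha
    rw [Submodule.mem_annihilator] at ha ⊢
    intro j hj
    have hj' : (σ i).symm j ∈ I := aux_symm_mem_of_sigmaDeltaPrime (σ i) I (hI i) j hj
    have := ha _ hj'
    rw [smul_eq_mul] at this ⊢
    calc σ i a * j = σ i (a * (σ i).symm j) := by
          rw [map_mul, RingEquiv.apply_symm_apply]
      _ = 0 := by rw [this, map_zero]
  -- annihilator of a Σ-invariant ideal is Δ-invariant
  have hannδ : ∀ (I : Ideal R), (∀ i, ∀ r ∈ I, σ i r ∈ I) →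
      ∀ i, ∀ a ∈ I.annihilator, δ i a ∈ I.annihilator := by
    intro I hI i a ha
    have haσ : σ i a ∈ I.annihilator := hannσ I hI i a ha
    rw [Submodule.mem_annihilator] at ha haσ ⊢
    intro j hj
    rw [smul_eq_mul]
    have h0 : a * j = 0 := by have := ha j hj; rwa [smul_eq_mul] at this
    have h1 : σ i a * δ i j + δ i a * j = 0 := by
      rw [← hleib i a j, h0, hδ0]
    have h2 : δ i a * j = -(σ i a * δ i j) := by linear_combination h1
    apply hsq
    have h3 : σ i a * j = 0 := by have := haσ j hj; rwa [smul_eq_mul] at this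
    calc (δ i a * j) * (δ i a * j) = (δ i a * j) * -(σ i a * δ i j) := by rw [← h2]
      _ = -((σ i a * j) * (δ i a * δ i j)) := by ring
      _ = 0 := by rw [h3]; ring
  -- main argument
  intro J K hJσ hKσ hJK
  by_contra hcon
  push_neg at hcon
  obtain ⟨hJ, hK⟩ := hcon
  set A : Ideal R := J.annihilator with hA
  set B : Ideal R := A.annihilator with hB
  have hAσ : ∀ i, ∀ r ∈ A, σ i r ∈ A := fun i => hannσ J hJσ i
  have hAδ : ∀ i, ∀ r ∈ A, δ i r ∈ A := fun i => hannδ J hJσ i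
  have hBσ : ∀ i, ∀ r ∈ B, σ i r ∈ B := fun i => hannσ A hAσ i
  have hBδ : ∀ i, ∀ r ∈ B, δ i r ∈ B := fun i => hannδ A hAσ i
  have hBA : B * A = ⊥ := by
    rw [eq_bot_iff]
    apply Ideal.mul_le.mpr
    intro b hb a ha
    rw [Ideal.mem_bot]
    have := (Submodule.mem_annihilator.mp hb) a ha
    rwa [smul_eq_mul] at this
  rcases hSDprime B A hBσ hBδ hAσ hAδ hBA with h | h
  · -- B = ⊥ but J ≤ B and J ≠ ⊥
    apply hJ
    rw [eq_bot_iff, ← h]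
    intro j hj
    rw [Submodule.mem_annihilator]
    intro a ha
    rw [smul_eq_mul, mul_comm]
    have := (Submodule.mem_annihilator.mp ha) j hj
    rwa [smul_eq_mul] at this
  · -- A = ⊥ but K ≤ A and K ≠ ⊥
    apply hK
    rw [eq_bot_iff, ← h]
    intro k hk
    rw [Submodule.mem_annihilator]
    intro j hj
    rw [smul_eq_mul, mul_comm]
    have : j * k ∈ J * K := Ideal.mul_mem_mul hj hk
    rwa [hJK, Ideal.mem_bot] at this
end

section
/- Let R be a ring, δ a derivation of R, and A = R[x; δ] the differential operator ring. If I is a proper δ-invariant ideal of R, then I is δ-prime (i.e., whenever J·K ⊆ I for δ-invariant ideals J, K of R, then J ⊆ I or K ⊆ I) if and only if the extension ideal I·A is a prime ideal of A; in this case I·A = A·I and I·A ∩ R = I. -/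
/-!
For a `δ`-invariant ideal `J` of `R`, the identity
`x * (i r * x ^ k) = i r * x ^ (k + 1) + i (δ r) * x ^ k` shows that multiplying by `x` on the
left keeps all coefficients in `J`. Hence `J·A` is a two-sided ideal with
`(J·A)(K·A) ⊆ (JK)·A` and `J·A ∩ R = J`, so primeness of `I·A` forces `δ`-primeness of `I`;
moving `x` leftwards with `i r * x = x * i r - i (δ r)` gives `I·A = A·I`.

Conversely, let ideals `𝔍`, `𝔎` of `A` not lie inside `I·A`, and pick `a ∈ 𝔍`, `b ∈ 𝔎` whose
last coefficients outside `I` sit in degrees `m`, `n`. Modulo `I`, leading coefficients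
multiply. So the degree-`m` coefficients (mod `I`) of the elements of `𝔍` of degree `≤ m`
modulo `I`, and likewise in degree `n` for `𝔎`, form two ideals of `R` whose product lies in
`I` while neither does. They are `δ`-invariant because the coefficients of `x * a - a * x` are
the `δ`-images of those of `a`.
-/

/-- `A` is the Ore extension `R[x; σ, δ]`: `R` embeds via `i`, `x·r = σ(r)·x + δ(r)`, and
`A` is a free left `R`-module with basis the powers of `x`. -/
structure IsOreExtension {R A : Type*} [Ring R] [Ring A]
    (σ : R →+* R) (δ : R → R) (i : R →+* A) (x : A) : Prop where
  inj : Function.Injective i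
  comm : ∀ r : R, x * i r = i (σ r) * x + i (δ r)
  repr : ∀ a : A, ∃! c : ℕ →₀ R, a = c.sum fun k r => i r * x ^ k

/-- The set `I·A` of elements of an Ore extension all of whose left coefficients lie in `I`. -/
def oreLeftCoeffSet {R A : Type*} [Ring R] [Ring A] (i : R →+* A) (x : A)
    (I : TwoSidedIdeal R) : Set A :=
  {a : A | ∃ c : ℕ →₀ R, (∀ k, c k ∈ I) ∧ a = c.sum fun k r => i r * x ^ k}

/-- The set `A·I` of elements of an Ore extension all of whose right coefficients lie in `I`. -/
def oreRightCoeffSet {R A : Type*} [Ring R] [Ring A] (i : R →+* A) (x : A)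
    (I : TwoSidedIdeal R) : Set A :=
  {a : A | ∃ c : ℕ →₀ R, (∀ k, c k ∈ I) ∧ a = c.sum fun k r => x ^ k * i r}

namespace TwoSidedIdeal

variable {R : Type*} [Ring R] {I : TwoSidedIdeal R}

theorem ringCon_mk'_eq_iff {r s : R} : I.ringCon.mk' r = I.ringCon.mk' s ↔ r - s ∈ I :=
  (RingCon.eq _).trans (I.rel_iff r s)

theorem ringCon_mk'_eq_zero_iff {r : R} : I.ringCon.mk' r = 0 ↔ r ∈ I := by
  rw [← map_zero I.ringCon.mk', ringCon_mk'_eq_iff, sub_zero]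

end TwoSidedIdeal

def IsDeltaPrime {R : Type*} [Ring R] (δ : R → R) (I : TwoSidedIdeal R) : Prop :=
  ∀ J K : TwoSidedIdeal R, (∀ r ∈ J, δ r ∈ J) → (∀ r ∈ K, δ r ∈ K) →
    (∀ a ∈ J, ∀ b ∈ K, a * b ∈ I) → J ≤ I ∨ K ≤ I

noncomputable def oreSum {R A : Type*} [Ring R] [Ring A] (i : R →+* A) (x : A) :
    (ℕ →₀ R) →+ A :=
  Finsupp.liftAddHom fun k => (AddMonoidHom.mulRight (x ^ k)).comp i.toAddMonoidHom

section oreSum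

variable {R A : Type*} [Ring R] [Ring A] (i : R →+* A) (x : A)

theorem oreSum_apply (c : ℕ →₀ R) : oreSum i x c = c.sum fun k r => i r * x ^ k := rfl

theorem oreSum_single (k : ℕ) (r : R) : oreSum i x (Finsupp.single k r) = i r * x ^ k :=
  Finsupp.liftAddHom_apply_single _ k r

theorem i_mul_oreSum (s : R) (c : ℕ →₀ R) : i s * oreSum i x c = oreSum i x (s • c) := by
  induction c using Finsupp.induction_linear with
  | zero => simp
  | add f g hf hg => rw [map_add, mul_add, hf, hg, smul_add, map_add]
  | single k r => rw [Finsupp.smul_single, oreSum_single, oreSum_single, smul_eq_mul, map_mul,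
      mul_assoc]

theorem oreSum_mul_x (c : ℕ →₀ R) :
    oreSum i x c * x = oreSum i x (c.embDomain (addRightEmbedding 1)) := by
  induction c using Finsupp.induction_linear with
  | zero => simp
  | add f g hf hg => rw [map_add, add_mul, hf, hg, Finsupp.embDomain_add, map_add]
  | single k r => rw [Finsupp.embDomain_single, oreSum_single, oreSum_single, mul_assoc,
      ← pow_succ, addRightEmbedding_apply]

end oreSum

section oreRightCoeffSet

variable {R A : Type*} [Ring R] [Ring A] (i : R →+* A) (x : A) (I : TwoSidedIdeal R)

def oreRightCoeffSubmonoid : AddSubmonoid A where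
  carrier := oreRightCoeffSet i x I
  zero_mem' := ⟨0, fun _ => I.zero_mem, by rw [Finsupp.sum_zero_index]⟩
  add_mem' := by
    rintro _ _ ⟨c, hc, rfl⟩ ⟨c', hc', rfl⟩
    refine ⟨c + c', fun k => I.add_mem (hc k) (hc' k), ?_⟩
    rw [Finsupp.sum_add_index' (fun _ => by simp) fun _ _ _ => by rw [map_add, mul_add]]

variable {i x I}

theorem pow_mul_i_mem_oreRightCoeffSet {r : R} (hr : r ∈ I) (k : ℕ) :
    x ^ k * i r ∈ oreRightCoeffSet i x I := by
  refine ⟨Finsupp.single k r, fun j => ?_, by rw [Finsupp.sum_single_index (by simp)]⟩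
  rw [Finsupp.single_apply]
  split_ifs
  exacts [hr, I.zero_mem]

end oreRightCoeffSet

namespace IsOreExtension

variable {R A : Type*} [Ring R] [Ring A] {σ : R →+* R} {δ : R → R} {i : R →+* A} {x : A}

section Coefficients

variable (hA : IsOreExtension σ δ i x)
include hA

theorem delta_add (r s : R) : δ (r + s) = δ r + δ s := by
  apply hA.inj
  calc i (δ (r + s)) = x * i (r + s) - i (σ (r + s)) * x := by rw [hA.comm]; abel
    _ = i (δ r + δ s) := by
      rw [map_add, mul_add, hA.comm, hA.comm, map_add, map_add, map_add, add_mul]; abel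

noncomputable def deltaHom : R →+ R := AddMonoidHom.mk' δ hA.delta_add

theorem delta_zero : δ 0 = 0 := map_zero hA.deltaHom

theorem delta_sub (r s : R) : δ (r - s) = δ r - δ s := map_sub hA.deltaHom r s

theorem bijective_oreSum : Function.Bijective (oreSum i x) :=
  ⟨fun _ c' h => (hA.repr _).unique rfl (h.trans (oreSum_apply i x c')),
    fun a => (hA.repr a).exists.imp fun _ => Eq.symm⟩

noncomputable def coeff : A ≃+ (ℕ →₀ R) := (AddEquiv.ofBijective _ hA.bijective_oreSum).symm

theorem oreSum_coeff (a : A) : oreSum i x (hA.coeff a) = a :=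
  (AddEquiv.ofBijective _ hA.bijective_oreSum).apply_symm_apply a

theorem coeff_oreSum (c : ℕ →₀ R) : hA.coeff (oreSum i x c) = c :=
  (AddEquiv.ofBijective _ hA.bijective_oreSum).symm_apply_apply c

theorem coeff_i_mul_pow (r : R) (k : ℕ) : hA.coeff (i r * x ^ k) = Finsupp.single k r := by
  rw [← oreSum_single, coeff_oreSum]

theorem coeff_i (r : R) : hA.coeff (i r) = Finsupp.single 0 r := by
  simpa using hA.coeff_i_mul_pow r 0

theorem coeff_i_mul (s : R) (a : A) : hA.coeff (i s * a) = s • hA.coeff a := by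
  rw [← hA.coeff_oreSum (s • _), ← i_mul_oreSum, oreSum_coeff]

theorem coeff_mul_x_zero (a : A) : hA.coeff (a * x) 0 = 0 := by
  rw [← hA.oreSum_coeff a, oreSum_mul_x, coeff_oreSum]
  exact Finsupp.embDomain_of_notMem_range _ _ _ (by simp)

theorem coeff_mul_x_succ (a : A) (k : ℕ) : hA.coeff (a * x) (k + 1) = hA.coeff a k := by
  rw [← hA.oreSum_coeff a, oreSum_mul_x, coeff_oreSum, coeff_oreSum]
  exact Finsupp.embDomain_apply_self (addRightEmbedding 1) _ k

theorem x_mul_oreSum (c : ℕ →₀ R) :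
    x * oreSum i x c = oreSum i x ((c.mapRange σ σ.map_zero).embDomain (addRightEmbedding 1))
      + oreSum i x (c.mapRange δ hA.delta_zero) := by
  induction c using Finsupp.induction_linear with
  | zero => simp
  | add f g hf hg =>
    rw [map_add, mul_add, hf, hg, Finsupp.mapRange_add (map_add σ), Finsupp.embDomain_add,
      Finsupp.mapRange_add hA.delta_add, map_add, map_add]
    abel
  | single k r =>
    rw [Finsupp.mapRange_single, Finsupp.mapRange_single, Finsupp.embDomain_single,
      oreSum_single, oreSum_single, oreSum_single, ← mul_assoc, hA.comm, add_mul, mul_assoc,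
      ← pow_succ', addRightEmbedding_apply]

theorem coeff_x_mul_zero (a : A) : hA.coeff (x * a) 0 = δ (hA.coeff a 0) := by
  rw [← hA.oreSum_coeff a, hA.x_mul_oreSum, ← map_add, coeff_oreSum, coeff_oreSum,
    Finsupp.add_apply, Finsupp.embDomain_of_notMem_range _ _ _ (by simp), zero_add,
    Finsupp.mapRange_apply]

theorem coeff_x_mul_succ (a : A) (k : ℕ) :
    hA.coeff (x * a) (k + 1) = σ (hA.coeff a k) + δ (hA.coeff a (k + 1)) := by
  rw [← hA.oreSum_coeff a, hA.x_mul_oreSum, ← map_add, coeff_oreSum, coeff_oreSum,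
    Finsupp.add_apply, Finsupp.mapRange_apply]
  congr 1
  exact (Finsupp.embDomain_apply_self (addRightEmbedding 1) _ k).trans (Finsupp.mapRange_apply ..)

theorem coeff_mul_apply (a b : A) (k : ℕ) :
    hA.coeff (a * b) k = (hA.coeff a).sum fun j r => r * hA.coeff (x ^ j * b) k := by
  conv_lhs => rw [← hA.oreSum_coeff a, oreSum_apply, Finsupp.sum_mul, Finsupp.sum, map_sum,
    Finsupp.finsetSum_apply]
  simp only [mul_assoc, coeff_i_mul, Finsupp.smul_apply, smul_eq_mul, Finsupp.sum]

theorem mem_oreLeftCoeffSet_iff {I : TwoSidedIdeal R} {a : A} :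
    a ∈ oreLeftCoeffSet i x I ↔ ∀ k, hA.coeff a k ∈ I := by
  constructor
  · rintro ⟨c, hc, rfl⟩
    rwa [← oreSum_apply, coeff_oreSum]
  · exact fun h => ⟨_, h, (hA.oreSum_coeff a).symm⟩

theorem i_mem_oreLeftCoeffSet_iff {I : TwoSidedIdeal R} {r : R} :
    i r ∈ oreLeftCoeffSet i x I ↔ r ∈ I := by
  rw [hA.mem_oreLeftCoeffSet_iff, coeff_i]
  refine ⟨fun h => by simpa using h 0, fun h k => ?_⟩
  rw [Finsupp.single_apply]
  split_ifs
  exacts [h, I.zero_mem]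

theorem preimage_oreLeftCoeffSet (I : TwoSidedIdeal R) : i ⁻¹' oreLeftCoeffSet i x I = I :=
  Set.ext fun _ => hA.i_mem_oreLeftCoeffSet_iff

theorem exists_coeff_notMem_of_notMem {I : TwoSidedIdeal R} {a : A}
    (ha : a ∉ oreLeftCoeffSet i x I) :
    ∃ m, hA.coeff a m ∉ I ∧ ∀ k, m < k → hA.coeff a k ∈ I := by
  obtain ⟨k, hk⟩ : ∃ k, hA.coeff a k ∉ I := by simpa [hA.mem_oreLeftCoeffSet_iff] using ha
  have hfin : {k | hA.coeff a k ∉ I}.Finite := (hA.coeff a).support.finite_toSet.subset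
    fun k hk => Finsupp.mem_support_iff.2 fun h0 => hk (h0 ▸ I.zero_mem)
  obtain ⟨m, hm⟩ := hfin.exists_maximal ⟨k, hk⟩
  exact ⟨m, hm.prop, fun k hmk => by_contra fun h => (hm.2 h hmk.le).not_gt hmk⟩

end Coefficients

section Derivation

variable (hA : IsOreExtension (RingHom.id R) δ i x)
include hA

open TwoSidedIdeal

theorem coeff_x_mul_sub_mul_x (a : A) (k : ℕ) :
    hA.coeff (x * a - a * x) k = δ (hA.coeff a k) := by
  rw [map_sub, Finsupp.sub_apply]
  cases k with
  | zero => rw [coeff_x_mul_zero, coeff_mul_x_zero, sub_zero]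
  | succ k => rw [coeff_x_mul_succ, coeff_mul_x_succ, RingHom.id_apply, add_sub_cancel_left]

theorem coeff_x_pow_mul_mem {J : TwoSidedIdeal R} (hJ : ∀ r ∈ J, δ r ∈ J) {a : A}
    (ha : ∀ k, hA.coeff a k ∈ J) (j k : ℕ) : hA.coeff (x ^ j * a) k ∈ J := by
  induction j generalizing k with
  | zero => simpa using ha k
  | succ j ih =>
    rw [pow_succ', mul_assoc]
    cases k with
    | zero => rw [coeff_x_mul_zero]; exact hJ _ (ih 0)
    | succ k => rw [coeff_x_mul_succ]; exact J.add_mem (ih k) (hJ _ (ih (k + 1)))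

theorem mul_mem_oreLeftCoeffSet {I J K : TwoSidedIdeal R} (hK : ∀ r ∈ K, δ r ∈ K)
    (hJK : ∀ r ∈ J, ∀ s ∈ K, r * s ∈ I) {a b : A} (ha : a ∈ oreLeftCoeffSet i x J)
    (hb : b ∈ oreLeftCoeffSet i x K) : a * b ∈ oreLeftCoeffSet i x I := by
  rw [hA.mem_oreLeftCoeffSet_iff] at ha hb ⊢
  intro k
  rw [coeff_mul_apply]
  exact sum_mem fun j _ => hJK _ (ha j) _ (hA.coeff_x_pow_mul_mem hK hb j k)

theorem mem_oreLeftCoeffSet_top (a : A) : a ∈ oreLeftCoeffSet i x ⊤ :=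
  hA.mem_oreLeftCoeffSet_iff.2 fun _ => mem_top _

noncomputable def extIdeal (J : TwoSidedIdeal R) (hJ : ∀ r ∈ J, δ r ∈ J) : TwoSidedIdeal A :=
  .mk' (oreLeftCoeffSet i x J)
    (hA.mem_oreLeftCoeffSet_iff.2 fun k => by simp)
    (fun ha hb => hA.mem_oreLeftCoeffSet_iff.2 fun k => by
      rw [map_add, Finsupp.add_apply]
      exact J.add_mem (hA.mem_oreLeftCoeffSet_iff.1 ha k) (hA.mem_oreLeftCoeffSet_iff.1 hb k))
    (fun ha => hA.mem_oreLeftCoeffSet_iff.2 fun k => by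
      rw [map_neg, Finsupp.neg_apply]
      exact J.neg_mem (hA.mem_oreLeftCoeffSet_iff.1 ha k))
    (hA.mul_mem_oreLeftCoeffSet hJ (fun _ _ _ h => J.mul_mem_left _ _ h)
      (hA.mem_oreLeftCoeffSet_top _))
    (fun ha => hA.mul_mem_oreLeftCoeffSet (fun _ _ => mem_top _)
      (fun _ h _ _ => J.mul_mem_right _ _ h) ha (hA.mem_oreLeftCoeffSet_top _))

theorem coe_extIdeal (J : TwoSidedIdeal R) (hJ : ∀ r ∈ J, δ r ∈ J) :
    (hA.extIdeal J hJ : Set A) = oreLeftCoeffSet i x J :=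
  coe_mk' _ _ _ _ _ _

theorem isDeltaPrime_of_oreLeftCoeffSet_prime {I : TwoSidedIdeal R}
    (hI : ∀ J K : TwoSidedIdeal A, (∀ a ∈ J, ∀ b ∈ K, a * b ∈ oreLeftCoeffSet i x I) →
      (J : Set A) ⊆ oreLeftCoeffSet i x I ∨ (K : Set A) ⊆ oreLeftCoeffSet i x I) :
    IsDeltaPrime δ I := by
  intro J K hJ hK hJK
  have hprod :
      ∀ a ∈ hA.extIdeal J hJ, ∀ b ∈ hA.extIdeal K hK, a * b ∈ oreLeftCoeffSet i x I :=
    fun a ha b hb => hA.mul_mem_oreLeftCoeffSet hK hJK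
      (hA.coe_extIdeal J hJ ▸ ha) (hA.coe_extIdeal K hK ▸ hb)
  have hle : ∀ {L : TwoSidedIdeal R} (hL : ∀ r ∈ L, δ r ∈ L),
      (hA.extIdeal L hL : Set A) ⊆ oreLeftCoeffSet i x I → L ≤ I := fun hL h r hr => by
    rw [coe_extIdeal] at h
    exact hA.i_mem_oreLeftCoeffSet_iff.1 (h (hA.i_mem_oreLeftCoeffSet_iff.2 hr))
  exact (hI _ _ hprod).imp (hle hJ) (hle hK)

section LeadingCoeff

variable {I : TwoSidedIdeal R} (hI : ∀ r ∈ I, δ r ∈ I)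
include hI

theorem coeff_x_pow_mul_of_mem {b : A} {n : ℕ} (hb : ∀ k, n < k → hA.coeff b k ∈ I)
    (j : ℕ) :
    (∀ k, n + j < k → hA.coeff (x ^ j * b) k ∈ I) ∧
      I.ringCon.mk' (hA.coeff (x ^ j * b) (n + j)) = I.ringCon.mk' (hA.coeff b n) := by
  induction j with
  | zero => simpa using hb
  | succ j ih =>
    rw [pow_succ', mul_assoc]
    refine ⟨fun k hk => ?_, ?_⟩
    · obtain ⟨k, rfl⟩ : ∃ k', k = k' + 1 := ⟨k - 1, by omega⟩
      rw [coeff_x_mul_succ, RingHom.id_apply]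
      exact I.add_mem (ih.1 k (by omega)) (hI _ (ih.1 _ (by omega)))
    · rw [← add_assoc, coeff_x_mul_succ, RingHom.id_apply, map_add, ih.2,
        ringCon_mk'_eq_zero_iff.2 (hI _ (ih.1 _ (by omega))), add_zero]

theorem coeff_mul_of_mem {a b : A} {m n : ℕ} (ha : ∀ k, m < k → hA.coeff a k ∈ I)
    (hb : ∀ k, n < k → hA.coeff b k ∈ I) :
    (∀ k, m + n < k → hA.coeff (a * b) k ∈ I) ∧
      I.ringCon.mk' (hA.coeff (a * b) (m + n)) =
        I.ringCon.mk' (hA.coeff a m) * I.ringCon.mk' (hA.coeff b n) := by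
  have hterm : ∀ j k, m < j ∨ n + j < k → hA.coeff a j * hA.coeff (x ^ j * b) k ∈ I := by
    rintro j k (hj | hjk)
    · exact I.mul_mem_right _ _ (ha j hj)
    · exact I.mul_mem_left _ _ ((hA.coeff_x_pow_mul_of_mem hI hb j).1 k hjk)
  refine ⟨fun k hk => ?_, ?_⟩
  · rw [coeff_mul_apply]
    exact sum_mem fun j _ => hterm j k (by omega)
  · rw [coeff_mul_apply, map_finsuppSum, Finsupp.sum_eq_single m, map_mul, add_comm m n,
      (hA.coeff_x_pow_mul_of_mem hI hb m).2]
    · exact fun j _ hjm => ringCon_mk'_eq_zero_iff.2 (hterm j _ (by omega))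
    · simp

noncomputable def leadingCoeffIdeal (L : TwoSidedIdeal A) (m : ℕ) : TwoSidedIdeal R :=
  .mk' {r | ∃ a ∈ L, (∀ k, m < k → hA.coeff a k ∈ I) ∧
      I.ringCon.mk' r = I.ringCon.mk' (hA.coeff a m)}
    ⟨0, L.zero_mem, by simp⟩
    (fun {_ _} ⟨a, ha, ham, hr⟩ ⟨b, hb, hbm, hs⟩ => ⟨a + b, L.add_mem ha hb,
      fun k hk => by rw [map_add, Finsupp.add_apply]; exact I.add_mem (ham k hk) (hbm k hk),
      by rw [map_add, map_add, Finsupp.add_apply, map_add, hr, hs]⟩)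
    (fun {_} ⟨a, ha, ham, hr⟩ => ⟨-a, L.neg_mem ha,
      fun k hk => by rw [map_neg, Finsupp.neg_apply]; exact I.neg_mem (ham k hk),
      by rw [map_neg, map_neg, Finsupp.neg_apply, map_neg, hr]⟩)
    (fun {s _} ⟨a, ha, ham, hr⟩ => ⟨i s * a, L.mul_mem_left _ _ ha,
      fun k hk => by
        rw [coeff_i_mul, Finsupp.smul_apply, smul_eq_mul]; exact I.mul_mem_left _ _ (ham k hk),
      by rw [coeff_i_mul, Finsupp.smul_apply, smul_eq_mul, map_mul, map_mul, hr]⟩)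
    (fun {_ s} ⟨a, ha, ham, hr⟩ => by
      have hs : ∀ k, 0 < k → hA.coeff (i s) k ∈ I := fun k hk => by
        rw [coeff_i, Finsupp.single_apply, if_neg hk.ne]; exact I.zero_mem
      obtain ⟨hlt, heq⟩ := hA.coeff_mul_of_mem hI ham hs
      rw [add_zero, coeff_i, Finsupp.single_eq_same] at heq
      exact ⟨a * i s, L.mul_mem_right _ _ ha, hlt, by rw [map_mul, hr, heq]⟩)

theorem mem_leadingCoeffIdeal {L : TwoSidedIdeal A} {m : ℕ} {r : R} :
    r ∈ hA.leadingCoeffIdeal hI L m ↔ ∃ a ∈ L, (∀ k, m < k → hA.coeff a k ∈ I) ∧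
      I.ringCon.mk' r = I.ringCon.mk' (hA.coeff a m) :=
  mem_mk' _ _ _ _ _ _ r

theorem coeff_mem_leadingCoeffIdeal {L : TwoSidedIdeal A} {m : ℕ} {a : A} (ha : a ∈ L)
    (ham : ∀ k, m < k → hA.coeff a k ∈ I) : hA.coeff a m ∈ hA.leadingCoeffIdeal hI L m :=
  (hA.mem_leadingCoeffIdeal hI).2 ⟨a, ha, ham, rfl⟩

theorem delta_mem_leadingCoeffIdeal {L : TwoSidedIdeal A} {m : ℕ} {r : R}
    (hr : r ∈ hA.leadingCoeffIdeal hI L m) : δ r ∈ hA.leadingCoeffIdeal hI L m := by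
  obtain ⟨a, ha, ham, hr⟩ := (hA.mem_leadingCoeffIdeal hI).1 hr
  refine (hA.mem_leadingCoeffIdeal hI).2 ⟨x * a - a * x,
    L.sub_mem (L.mul_mem_left _ _ ha) (L.mul_mem_right _ _ ha), fun k hk => ?_, ?_⟩
  · rw [coeff_x_mul_sub_mul_x]
    exact hI _ (ham k hk)
  · rw [coeff_x_mul_sub_mul_x, ringCon_mk'_eq_iff, ← delta_sub hA]
    exact hI _ (ringCon_mk'_eq_iff.1 hr)

theorem oreLeftCoeffSet_prime_of_isDeltaPrime (hprime : IsDeltaPrime δ I)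
    (J K : TwoSidedIdeal A) (hJK : ∀ a ∈ J, ∀ b ∈ K, a * b ∈ oreLeftCoeffSet i x I) :
    (J : Set A) ⊆ oreLeftCoeffSet i x I ∨ (K : Set A) ⊆ oreLeftCoeffSet i x I := by
  by_contra! h
  obtain ⟨a, haJ, ha⟩ := Set.not_subset.1 h.1
  obtain ⟨b, hbK, hb⟩ := Set.not_subset.1 h.2
  obtain ⟨m, ham, hma⟩ := hA.exists_coeff_notMem_of_notMem ha
  obtain ⟨n, hbn, hnb⟩ := hA.exists_coeff_notMem_of_notMem hb
  have hprod : ∀ r ∈ hA.leadingCoeffIdeal hI J m, ∀ s ∈ hA.leadingCoeffIdeal hI K n,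
      r * s ∈ I := by
    intro r hr s hs
    obtain ⟨a', ha'J, ha'm, hr⟩ := (hA.mem_leadingCoeffIdeal hI).1 hr
    obtain ⟨b', hb'K, hb'n, hs⟩ := (hA.mem_leadingCoeffIdeal hI).1 hs
    rw [← ringCon_mk'_eq_zero_iff, map_mul, hr, hs, ← (hA.coeff_mul_of_mem hI ha'm hb'n).2,
      ringCon_mk'_eq_zero_iff]
    exact hA.mem_oreLeftCoeffSet_iff.1 (hJK _ ha'J _ hb'K) _
  rcases hprime _ _ (fun _ => hA.delta_mem_leadingCoeffIdeal hI)
    (fun _ => hA.delta_mem_leadingCoeffIdeal hI) hprod with hle | hle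
  · exact ham (hle (hA.coeff_mem_leadingCoeffIdeal hI haJ hma))
  · exact hbn (hle (hA.coeff_mem_leadingCoeffIdeal hI hbK hnb))

end LeadingCoeff

section RightCoeff

variable {I : TwoSidedIdeal R} (hI : ∀ r ∈ I, δ r ∈ I)
include hI

theorem mul_x_mem_oreRightCoeffSet {q : A} (hq : q ∈ oreRightCoeffSet i x I) :
    q * x ∈ oreRightCoeffSet i x I := by
  obtain ⟨c, hc, rfl⟩ := hq
  rw [Finsupp.sum_mul]
  refine sum_mem (S := oreRightCoeffSubmonoid i x I) fun k _ =>
    show x ^ k * i (c k) * x ∈ _ from ?_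
  have hcomm : i (c k) * x = x * i (c k) + i (-δ (c k)) := by
    rw [hA.comm, RingHom.id_apply, map_neg]
    abel
  rw [mul_assoc, hcomm, mul_add, ← mul_assoc, ← pow_succ]
  exact (oreRightCoeffSubmonoid i x I).add_mem (pow_mul_i_mem_oreRightCoeffSet (hc k) _)
    (pow_mul_i_mem_oreRightCoeffSet (I.neg_mem (hI _ (hc k))) _)

theorem i_mul_pow_mem_oreRightCoeffSet {r : R} (hr : r ∈ I) (k : ℕ) :
    i r * x ^ k ∈ oreRightCoeffSet i x I := by
  induction k with
  | zero => simpa using pow_mul_i_mem_oreRightCoeffSet hr 0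
  | succ k ih => rw [pow_succ, ← mul_assoc]; exact hA.mul_x_mem_oreRightCoeffSet hI ih

theorem oreLeftCoeffSet_eq_oreRightCoeffSet :
    oreLeftCoeffSet i x I = oreRightCoeffSet i x I := by
  refine subset_antisymm ?_ ?_
  · rintro _ ⟨c, hc, rfl⟩
    exact sum_mem (S := oreRightCoeffSubmonoid i x I) fun k _ =>
      hA.i_mul_pow_mem_oreRightCoeffSet hI (hc k) k
  · rintro _ ⟨c, hc, rfl⟩
    rw [← hA.coe_extIdeal I hI]
    refine sum_mem fun k _ => (hA.extIdeal I hI).mul_mem_left _ _ ?_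
    rw [← SetLike.mem_coe, coe_extIdeal]
    exact hA.i_mem_oreLeftCoeffSet_iff.2 (hc k)

end RightCoeff

end Derivation

end IsOreExtension

theorem deltaPrime_iff_extension_prime_general
    {R A : Type*} [Ring R] [Ring A]
    (δ : R → R)
    (i : R →+* A) (x : A) (hA : IsOreExtension (RingHom.id R) δ i x)
    (I : TwoSidedIdeal R) (hproper : (I : Set R) ≠ Set.univ)
    (hδinv : ∀ r ∈ I, δ r ∈ I) :
    ((∀ J K : TwoSidedIdeal R,
        (∀ r ∈ J, δ r ∈ J) → (∀ r ∈ K, δ r ∈ K) →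
        (∀ a ∈ J, ∀ b ∈ K, a * b ∈ I) → J ≤ I ∨ K ≤ I) ↔
      (oreLeftCoeffSet i x I ≠ Set.univ ∧
        ∀ J K : TwoSidedIdeal A,
          (∀ a ∈ J, ∀ b ∈ K, a * b ∈ oreLeftCoeffSet i x I) →
          (J : Set A) ⊆ oreLeftCoeffSet i x I ∨ (K : Set A) ⊆ oreLeftCoeffSet i x I)) ∧
    oreLeftCoeffSet i x I = oreRightCoeffSet i x I ∧
    ⇑i ⁻¹' oreLeftCoeffSet i x I = (I : Set R) := by
  have hne : oreLeftCoeffSet i x I ≠ Set.univ := fun h =>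
    hproper (by rw [← hA.preimage_oreLeftCoeffSet I, h, Set.preimage_univ])
  exact ⟨⟨fun h => ⟨hne, hA.oreLeftCoeffSet_prime_of_isDeltaPrime hδinv h⟩,
    fun h => hA.isDeltaPrime_of_oreLeftCoeffSet_prime h.2⟩,
    hA.oreLeftCoeffSet_eq_oreRightCoeffSet hδinv, hA.preimage_oreLeftCoeffSet I⟩

/-- Let `δ` be a derivation of `R` and `A = R[x; δ]` the differential operator
ring (Ore extension with `σ = id`). If `I` is a proper `δ`-invariant two-sided ideal of `R`,
then `I` is `δ`-prime iff the extension ideal `I·A` is a prime ideal of `A`; in this case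
`I·A = A·I` and `I·A ∩ R = I`. -/
theorem deltaPrime_iff_extension_prime
    {R A : Type*} [Ring R] [Ring A]
    (δ : R → R)
    (hadd : ∀ r s : R, δ (r + s) = δ r + δ s)
    (hleib : ∀ r s : R, δ (r * s) = δ r * s + r * δ s)
    (i : R →+* A) (x : A) (hA : IsOreExtension (RingHom.id R) δ i x)
    (I : TwoSidedIdeal R) (hproper : (I : Set R) ≠ Set.univ)
    (hδinv : ∀ r ∈ I, δ r ∈ I) :
    ((∀ J K : TwoSidedIdeal R,
        (∀ r ∈ J, δ r ∈ J) → (∀ r ∈ K, δ r ∈ K) →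
        (∀ a ∈ J, ∀ b ∈ K, a * b ∈ I) → J ≤ I ∨ K ≤ I) ↔
      (oreLeftCoeffSet i x I ≠ Set.univ ∧
        ∀ J K : TwoSidedIdeal A,
          (∀ a ∈ J, ∀ b ∈ K, a * b ∈ oreLeftCoeffSet i x I) →
          (J : Set A) ⊆ oreLeftCoeffSet i x I ∨ (K : Set A) ⊆ oreLeftCoeffSet i x I)) ∧
    oreLeftCoeffSet i x I = oreRightCoeffSet i x I ∧
    ⇑i ⁻¹' oreLeftCoeffSet i x I = (I : Set R) :=
  deltaPrime_iff_extension_prime_general δ i x hA I hproper hδinv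
end

section
/- Let R be a prime ring, σ an automorphism of R, and δ a σ-derivation of R. Then the Ore extension A = R[x; σ, δ] is a prime ring. -/
/-- A ring is prime if the product of two nonzero two-sided ideals is nonzero. -/
def IsPrimeRing' (R : Type*) [Ring R] : Prop :=
  ∀ J K : TwoSidedIdeal R, (∀ a ∈ J, ∀ b ∈ K, a * b = 0) → J = ⊥ ∨ K = ⊥

/-!
Leading coefficients. Modulo terms of lower degree `xⁿ r ≡ σⁿ(r) xⁿ`, so if `a, b ∈ A` have
degrees `n, m` and leading coefficients `p, q`, then `a r b` has `(n + m)`-th coefficient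
`p σⁿ(r) σⁿ(q)`. If `J K = 0` for nonzero ideals, pick nonzero `a ∈ J`, `b ∈ K`; then `a R b = 0`
forces `p R σⁿ(q) = 0` (as `σ` is onto), and primeness of `R` gives `p = 0` or `σⁿ(q) = 0`.
-/

namespace IsPrimeRing'

variable {R : Type*} [Ring R]

theorem eq_zero_or_eq_zero_of_forall_mul_mul_eq_zero (hR : IsPrimeRing' R) {p q : R}
    (h : ∀ s, p * s * q = 0) : p = 0 ∨ q = 0 := by
  -- `I = {y | y R q = 0}` contains `p` and annihilates `J = {z | I R z = 0}`, which contains `q`.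
  let I : TwoSidedIdeal R := .mk' {y | ∀ s, y * s * q = 0}
    (fun s => by simp)
    (fun {y z} hy hz s => by rw [add_mul, add_mul, hy s, hz s, add_zero])
    (fun {y} hy s => by rw [neg_mul, neg_mul, hy s, neg_zero])
    (fun {r y} hy s => by rw [mul_assoc r y s, mul_assoc r, hy s, mul_zero])
    (fun {y r} hy s => by rw [mul_assoc y r s]; exact hy (r * s))
  let J : TwoSidedIdeal R := .mk' {z | ∀ y ∈ I, ∀ s, y * s * z = 0}
    (fun y _ s => by simp)
    (fun {z w} hz hw y hy s => by rw [mul_add, hz y hy s, hw y hy s, add_zero])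
    (fun {z} hz y hy s => by rw [mul_neg, hz y hy s, neg_zero])
    (fun {r z} hz y hy s => by rw [← mul_assoc, mul_assoc y s r]; exact hz y hy (s * r))
    (fun {z r} hz y hy s => by rw [← mul_assoc, hz y hy s, zero_mul])
  have hpI : p ∈ I := (TwoSidedIdeal.mem_mk' ..).2 h
  have hqJ : q ∈ J := (TwoSidedIdeal.mem_mk' ..).2 fun y hy => (TwoSidedIdeal.mem_mk' ..).1 hy
  have hIJ : ∀ y ∈ I, ∀ z ∈ J, y * z = 0 := fun y hy z hz => by
    simpa using (TwoSidedIdeal.mem_mk' ..).1 hz y hy 1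
  refine (hR I J hIJ).imp (fun hI => ?_) (fun hJ => ?_)
  · exact (TwoSidedIdeal.mem_bot R).1 (hI ▸ hpI)
  · exact (TwoSidedIdeal.mem_bot R).1 (hJ ▸ hqJ)

end IsPrimeRing'

namespace OreExtension

variable {R A : Type*} [Ring R] [Ring A] (i : R →+* A) (x : A)

def degreeLT (n : ℕ) : AddSubgroup A :=
  AddSubgroup.closure {y | ∃ r, ∃ k < n, y = i r * x ^ k}

/-- Since `p` may be `0`, this says that `a` has degree at most `n` with `n`-th coefficient `p`. -/
def HasTopCoeff (a : A) (n : ℕ) (p : R) : Prop :=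
  a - i p * x ^ n ∈ degreeLT i x n

/-- `c ↦ ∑ₖ i(c k) xᵏ`, the map whose bijectivity is `IsOreExtension.repr`. -/
noncomputable def sumMonomials : (ℕ →₀ R) →+ A :=
  Finsupp.liftAddHom fun k => (AddMonoidHom.mulRight (x ^ k)).comp i.toAddMonoidHom

variable {i x}

theorem monomial_mem_degreeLT (r : R) {k n : ℕ} (h : k < n) : i r * x ^ k ∈ degreeLT i x n :=
  AddSubgroup.subset_closure ⟨r, k, h, rfl⟩

theorem degreeLT_le_iff {n : ℕ} {G : AddSubgroup A} :
    degreeLT i x n ≤ G ↔ ∀ r, ∀ k < n, i r * x ^ k ∈ G := by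
  rw [degreeLT, AddSubgroup.closure_le]
  exact ⟨fun h r k hk => h ⟨r, k, hk, rfl⟩,
    by rintro h _ ⟨r, k, hk, rfl⟩; exact h r k hk⟩

theorem degreeLT_mono {m n : ℕ} (h : m ≤ n) : degreeLT i x m ≤ degreeLT i x n :=
  degreeLT_le_iff.2 fun r _ hk => monomial_mem_degreeLT r (hk.trans_le h)

theorem const_mul_mem_degreeLT (r : R) {b : A} {n : ℕ} (hb : b ∈ degreeLT i x n) :
    i r * b ∈ degreeLT i x n := by
  refine degreeLT_le_iff (G := (degreeLT i x n).comap (AddMonoidHom.mulLeft (i r))).2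
    (fun s k hk => ?_) hb
  simpa [← mul_assoc, ← map_mul] using monomial_mem_degreeLT (r * s) hk

theorem mul_pow_mem_degreeLT {b : A} {n : ℕ} (hb : b ∈ degreeLT i x n) (l : ℕ) :
    b * x ^ l ∈ degreeLT i x (n + l) := by
  refine degreeLT_le_iff (G := (degreeLT i x (n + l)).comap (AddMonoidHom.mulRight (x ^ l))).2
    (fun r k hk => ?_) hb
  simpa [mul_assoc, ← pow_add] using monomial_mem_degreeLT r (Nat.add_lt_add_right hk l)

theorem HasTopCoeff.mem_degreeLT {a : A} {n : ℕ} {p : R} (h : HasTopCoeff i x a n p) :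
    a ∈ degreeLT i x (n + 1) := by
  rw [← sub_add_cancel a (i p * x ^ n)]
  exact add_mem (degreeLT_mono n.le_succ h) (monomial_mem_degreeLT p n.lt_succ_self)

theorem sumMonomials_single (k : ℕ) (r : R) :
    sumMonomials i x (Finsupp.single k r) = i r * x ^ k :=
  Finsupp.liftAddHom_apply_single _ k r

theorem degreeLT_eq_map (n : ℕ) :
    degreeLT i x n = (Finsupp.supported R R (Set.Iio n)).toAddSubgroup.map (sumMonomials i x) := by
  refine le_antisymm (degreeLT_le_iff.2 fun r k hk => ?_) (AddSubgroup.map_le_iff_le_comap.2 ?_)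
  · exact ⟨Finsupp.single k r, Finsupp.single_mem_supported R r hk, sumMonomials_single k r⟩
  · intro c hc
    rw [AddSubgroup.mem_comap, sumMonomials, Finsupp.liftAddHom_apply]
    exact AddSubgroup.sum_mem _ fun k hk =>
      monomial_mem_degreeLT (c k) ((Finsupp.mem_supported R c).1 hc hk)

variable {σ : R →+* R} {δ : R → R}

theorem x_mul_mem_degreeLT (hA : IsOreExtension σ δ i x) {b : A} {n : ℕ}
    (hb : b ∈ degreeLT i x n) : x * b ∈ degreeLT i x (n + 1) := by
  refine degreeLT_le_iff (G := (degreeLT i x (n + 1)).comap (AddMonoidHom.mulLeft x)).2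
    (fun r k hk => ?_) hb
  have hcomm : x * (i r * x ^ k) = i (σ r) * x ^ (k + 1) + i (δ r) * x ^ k := by
    rw [← mul_assoc, hA.comm, add_mul, pow_succ', mul_assoc]
  simpa [hcomm] using add_mem (monomial_mem_degreeLT (σ r) (Nat.succ_lt_succ hk))
    (monomial_mem_degreeLT (δ r) (hk.trans n.lt_succ_self))

theorem HasTopCoeff.x_mul (hA : IsOreExtension σ δ i x) {a : A} {n : ℕ} {p : R}
    (h : HasTopCoeff i x a n p) : HasTopCoeff i x (x * a) (n + 1) (σ p) := by
  have key : x * a - i (σ p) * x ^ (n + 1) = x * (a - i p * x ^ n) + i (δ p) * x ^ n := by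
    rw [mul_sub, ← mul_assoc x, hA.comm, add_mul, pow_succ', mul_assoc]
    abel
  rw [HasTopCoeff, key]
  exact add_mem (x_mul_mem_degreeLT hA h) (monomial_mem_degreeLT _ n.lt_succ_self)

theorem hasTopCoeff_pow_mul_const (hA : IsOreExtension σ δ i x) (k : ℕ) (s : R) :
    HasTopCoeff i x (x ^ k * i s) k (σ^[k] s) := by
  induction k with
  | zero => simp [HasTopCoeff]
  | succ k ih =>
    rw [pow_succ', mul_assoc, Function.iterate_succ_apply']
    exact ih.x_mul hA

theorem mul_const_mem_degreeLT (hA : IsOreExtension σ δ i x) (s : R) {b : A} {n : ℕ}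
    (hb : b ∈ degreeLT i x n) : b * i s ∈ degreeLT i x n := by
  refine degreeLT_le_iff (G := (degreeLT i x n).comap (AddMonoidHom.mulRight (i s))).2
    (fun r k hk => ?_) hb
  simpa [mul_assoc] using degreeLT_mono hk
    (const_mul_mem_degreeLT r (hasTopCoeff_pow_mul_const hA k s).mem_degreeLT)

theorem HasTopCoeff.mul_const (hA : IsOreExtension σ δ i x) {a : A} {n : ℕ} {p : R}
    (h : HasTopCoeff i x a n p) (s : R) : HasTopCoeff i x (a * i s) n (p * σ^[n] s) := by
  have key : a * i s - i (p * σ^[n] s) * x ^ n =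
      (a - i p * x ^ n) * i s + i p * (x ^ n * i s - i (σ^[n] s) * x ^ n) := by
    simp only [map_mul, mul_sub, sub_mul, mul_assoc]
    abel
  rw [HasTopCoeff, key]
  exact add_mem (mul_const_mem_degreeLT hA s h)
    (const_mul_mem_degreeLT p (hasTopCoeff_pow_mul_const hA n s))

theorem mul_mem_degreeLT (hA : IsOreExtension σ δ i x) {a b : A} {n m : ℕ}
    (ha : a ∈ degreeLT i x (n + 1)) (hb : b ∈ degreeLT i x m) :
    a * b ∈ degreeLT i x (n + m) := by
  refine degreeLT_le_iff (G := (degreeLT i x (n + m)).comap (AddMonoidHom.mulLeft a)).2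
    (fun r k hk => ?_) hb
  simpa [mul_assoc] using degreeLT_mono (by omega)
    (mul_pow_mem_degreeLT (mul_const_mem_degreeLT hA r ha) k)

theorem HasTopCoeff.mul (hA : IsOreExtension σ δ i x) {a b : A} {n m : ℕ} {p q : R}
    (ha : HasTopCoeff i x a n p) (hb : HasTopCoeff i x b m q) :
    HasTopCoeff i x (a * b) (n + m) (p * σ^[n] q) := by
  have key : a * b - i (p * σ^[n] q) * x ^ (n + m) =
      a * (b - i q * x ^ m) + (a * i q - i (p * σ^[n] q) * x ^ n) * x ^ m := by
    simp only [mul_sub, sub_mul, mul_assoc, pow_add]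
    abel
  rw [HasTopCoeff, key]
  exact add_mem (mul_mem_degreeLT hA ha.mem_degreeLT hb)
    (mul_pow_mem_degreeLT (ha.mul_const hA q) m)

theorem _root_.IsOreExtension.sumMonomials_injective (hA : IsOreExtension σ δ i x) :
    Function.Injective (sumMonomials i x) := fun _ _ h =>
  (hA.repr _).unique rfl (h.trans rfl)

theorem eq_zero_of_monomial_mem_degreeLT (hA : IsOreExtension σ δ i x) {p : R} {n : ℕ}
    (h : i p * x ^ n ∈ degreeLT i x n) : p = 0 := by
  rw [degreeLT_eq_map] at h
  obtain ⟨c, hc, hcp⟩ := h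
  rw [← sumMonomials_single] at hcp
  rw [← Finsupp.single_eq_same (a := n) (b := p), ← hA.sumMonomials_injective hcp]
  exact Finsupp.notMem_support_iff.1 fun hn => lt_irrefl n ((Finsupp.mem_supported R c).1 hc hn)

theorem HasTopCoeff.eq_zero_of_eq_zero (hA : IsOreExtension σ δ i x) {a : A} {n : ℕ} {p : R}
    (h : HasTopCoeff i x a n p) (ha : a = 0) : p = 0 := by
  rw [HasTopCoeff, ha, zero_sub, neg_mem_iff] at h
  exact eq_zero_of_monomial_mem_degreeLT hA h

theorem exists_hasTopCoeff (hA : IsOreExtension σ δ i x) {a : A} (ha : a ≠ 0) :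
    ∃ n p, p ≠ 0 ∧ HasTopCoeff i x a n p := by
  obtain ⟨c, rfl, -⟩ := hA.repr a
  induction c using Finsupp.induction_on_max with
  | zero => exact absurd (map_zero (sumMonomials i x)) ha
  | single_add n p c hlt hp _ =>
    refine ⟨n, p, hp, ?_⟩
    change sumMonomials i x (Finsupp.single n p + c) - i p * x ^ n ∈ degreeLT i x n
    rw [map_add, sumMonomials_single, add_sub_cancel_left, degreeLT_eq_map]
    exact ⟨c, (Finsupp.mem_supported R c).2 hlt, rfl⟩

end OreExtension

open OreExtension in
theorem ore_extension_of_prime_is_prime_general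
    {R A : Type*} [Ring R] [Ring A]
    (σ : R ≃+* R) (δ : R → R)
    (i : R →+* A) (x : A) (hA : IsOreExtension (σ : R →+* R) δ i x)
    (hprime : IsPrimeRing' R) :
    IsPrimeRing' A := by
  intro J K hJK
  refine or_iff_not_imp_left.2 fun hJ => eq_bot_iff.2 fun b hbK => ?_
  obtain ⟨a, haJ, ha⟩ := SetLike.exists_of_lt (bot_lt_iff_ne_bot.2 hJ)
  rw [TwoSidedIdeal.mem_bot] at ha ⊢
  by_contra hb
  obtain ⟨n, p, hp, hap⟩ := exists_hasTopCoeff hA ha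
  obtain ⟨m, q, hq, hbq⟩ := exists_hasTopCoeff hA hb
  have hcoeff (r : R) : p * σ^[n] r * σ^[n] q = 0 :=
    ((hap.mul_const hA r).mul hA hbq).eq_zero_of_eq_zero hA <| by
      rw [mul_assoc]
      exact hJK a haJ _ (K.mul_mem_left _ _ hbK)
  have hpq : ∀ s, p * s * σ^[n] q = 0 := (σ.surjective.iterate n).forall.2 hcoeff
  refine (hprime.eq_zero_or_eq_zero_of_forall_mul_mul_eq_zero hpq).elim hp fun h => hq ?_
  exact σ.injective.iterate n (h.trans (iterate_map_zero σ n).symm)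

/-- Let `R` be a prime ring, `σ` an automorphism of `R`, and `δ` a
`σ`-derivation of `R`. Then the Ore extension `A = R[x; σ, δ]` is a prime ring. -/
theorem ore_extension_of_prime_is_prime
    {R A : Type*} [Ring R] [Ring A]
    (σ : R ≃+* R) (δ : R → R)
    (hadd : ∀ r s : R, δ (r + s) = δ r + δ s)
    (hleib : ∀ r s : R, δ (r * s) = σ r * δ s + δ r * s)
    (i : R →+* A) (x : A) (hA : IsOreExtension (σ : R →+* R) δ i x)
    (hprime : IsPrimeRing' R) :
    IsPrimeRing' A :=
  ore_extension_of_prime_is_prime_general σ δ i x hA hprime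
end
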